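/- Let f(x) = x/√(1+x²) and let K ⊆ ℝ be compact. Then the function (x, t) ↦ (f(x − t) − 1)(1 + x²) is uniformly bounded for x ∈ [0, ∞) and t ∈ K, and the function (x, t) ↦ (f(x − t) + 1)(1 + x²) is uniformly bounded for x ∈ (−∞, 0] and t ∈ K. -/

import Mathlib

lemma aux6 (x t C : ℝ) (hx : 0 ≤ x) (ht : |t| ≤ C) :
    |((x - t) / Real.sqrt (1 + (x - t) ^ 2) - 1) * (1 + x ^ 2)| ≤ 2 * (1 + C ^ 2) := by
  have htC : t ^ 2 ≤ C ^ 2 := sq_le_sq' (by linarith [(abs_le.1 ht).1]) (abs_le.1 ht).2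
  have hC : 0 ≤ C := le_trans (abs_nonneg t) ht
  set u := x - t with hu
  have hsq : (0:ℝ) < 1 + u ^ 2 := by positivity
  set s := Real.sqrt (1 + u ^ 2) with hs
  have hs2 : s ^ 2 = 1 + u ^ 2 := Real.sq_sqrt hsq.le
  have hspos : 0 < s := Real.sqrt_pos.2 hsq
  have hus : |u| ≤ s := by
    rw [hs, ← Real.sqrt_sq_eq_abs]
    exact Real.sqrt_le_sqrt (by linarith)
  have huls : u ≤ s := (abs_le.1 hus).2
  have hnls : -s ≤ u := (abs_le.1 hus).1
  have h1 : u / s ≤ 1 := (div_le_one hspos).2 huls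
  have habs : |(u / s - 1) * (1 + x ^ 2)| = (s - u) / s * (1 + x ^ 2) := by
    rw [abs_mul, abs_of_nonneg (by positivity : (0:ℝ) ≤ 1 + x ^ 2),
      abs_of_nonpos (by linarith : u / s - 1 ≤ 0)]
    field_simp
    ring
  rw [habs]
  by_cases hupos : 0 ≤ u
  · rw [div_mul_eq_mul_div, div_le_iff₀ hspos]
    have key : 1 + x ^ 2 ≤ 2 * (1 + C ^ 2) * (1 + u ^ 2) := by
      nlinarith [sq_nonneg (u - t), sq_nonneg (u + t), mul_nonneg (sq_nonneg C) (sq_nonneg u)]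
    have hsu : (s - u) * (s + u) = 1 := by nlinarith [hs2]
    have hsplus : 0 < s + u := by linarith
    have step : (s - u) * (1 + x ^ 2) * (s + u) ≤ 2 * (1 + C ^ 2) * s * (s + u) := by
      have l : (s - u) * (1 + x ^ 2) * (s + u) = 1 + x ^ 2 := by
        have : (s - u) * (1 + x ^ 2) * (s + u) = (s - u) * (s + u) * (1 + x ^ 2) := by ring
        rw [this, hsu, one_mul]
      rw [l]
      nlinarith [key, hs2, mul_nonneg hspos.le hupos, hC, sq_nonneg C, mul_nonneg hC (sq_nonneg u)]
    exact le_of_mul_le_mul_right step hsplus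
  · push_neg at hupos
    have hxC : x ≤ C := by
      have hxt : x < t := by linarith [hu ▸ hupos]
      linarith [le_abs_self t]
    have h2 : 1 + x ^ 2 ≤ 1 + C ^ 2 := by nlinarith
    have hd2 : (s - u) / s ≤ 2 := by
      rw [div_le_iff₀ hspos]; linarith
    have hnn : 0 ≤ (s - u) / s := div_nonneg (by linarith) hspos.le
    calc (s - u) / s * (1 + x ^ 2) ≤ 2 * (1 + C ^ 2) :=
      mul_le_mul hd2 h2 (by positivity) (by norm_num)

/-- With `f(x) = x/√(1+x²)` and `K ⊆ ℝ` compact, `(f(x−t) − 1)(1+x²)` is uniformly bounded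
for `x ∈ [0,∞)`, `t ∈ K`, and `(f(x−t) + 1)(1+x²)` is uniformly bounded for
`x ∈ (−∞,0]`, `t ∈ K`. -/
theorem stmt6 (K : Set ℝ) (hK : IsCompact K) :
    ∃ M : ℝ,
      (∀ x : ℝ, 0 ≤ x → ∀ t ∈ K,
        |((x - t) / Real.sqrt (1 + (x - t) ^ 2) - 1) * (1 + x ^ 2)| ≤ M) ∧
      (∀ x : ℝ, x ≤ 0 → ∀ t ∈ K,
        |((x - t) / Real.sqrt (1 + (x - t) ^ 2) + 1) * (1 + x ^ 2)| ≤ M) := by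
  obtain ⟨r, hr⟩ := hK.isBounded.subset_closedBall 0
  have hC : ∀ t ∈ K, |t| ≤ r := by
    intro t htK
    have := hr htK
    rwa [Metric.mem_closedBall, Real.dist_eq, sub_zero] at this
  refine ⟨2 * (1 + r ^ 2), ?_, ?_⟩
  · intro x hx t htK
    exact aux6 x t r hx (hC t htK)
  · intro x hx t htK
    have h := aux6 (-x) (-t) r (by linarith) (by rw [abs_neg]; exact hC t htK)
    have e : -x - -t = -(x - t) := by ring
    rw [e, neg_sq, neg_sq] at h
    have e2 : (-(x - t) / Real.sqrt (1 + (x - t) ^ 2) - 1) * (1 + x ^ 2)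
        = -(((x - t) / Real.sqrt (1 + (x - t) ^ 2) + 1) * (1 + x ^ 2)) := by ring
    rw [e2, abs_neg] at h
    exact h
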